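/- Let q > 2, M > 0, and let E(u) = ½‖u‖² − ∫_Ω F(u)dx − ∫_{∂Ω} G(u)dσ on H¹(Ω) with norm ‖u‖² = ∫_Ω|∇u|² + ∫_{∂Ω}|u|²dσ, where 0 ≤ qF(t) ≤ f(t)t and 0 ≤ qG(t) ≤ g(t)t. Suppose u ∈ H¹(Ω) satisfies ⟨E'(u), u⟩ = 0, E(u) ≤ Mμ, 1/λ̂ ‖u‖² ≥ ‖u‖₂², 1/λ̃ ‖u‖² ≥ ‖u‖²_{L²(∂Ω)}, |f(t)| ≤ K₂|t| + K_p|t|^{p−1}, |g(t)| ≤ K₂ᵍ|t| + K_l|t|^{l−1}, ‖u‖_p^p ≤ C_p‖u‖^p, ‖u‖_{L^l(∂Ω)}^l ≤ C_l'‖u‖^l, with p, l > 2, λ̂, λ̃ > 0, K₂/λ̂ + K₂ᵍ/λ̃ < 1. Then if u ≠ 0, 1 − K₂/λ̂ − K₂ᵍ/λ̃ ≤ K_p C_p (2qMμ/(q−2))^{(p−2)/2} + K_l C_l' (2qMμ/(q−2))^{(l−2)/2}. In particular for μ small enough no such nonzero u exists. -/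

import Mathlib

/-- Non-existence lemma for the Robin-type problem. Here `nu = ‖u‖` denotes the
`H¹(Ω)`-norm (with boundary term), `l2sq = ‖u‖₂²`, `bdsq = ‖u‖²_{L²(∂Ω)}`,
`intfu = ∫_Ω f(u)u`, `intgu = ∫_{∂Ω} g(u)u`, `intF = ∫_Ω F(u)`,
`intG = ∫_{∂Ω} G(u)`, `lp = ‖u‖_p^p`, `ll = ‖u‖_{L^l(∂Ω)}^l`. Under the
eigenvalue inequalities, the growth/embedding bounds, the AR conditions, the
critical point identity `⟨E'(u),u⟩ = 0` and the energy bound `E(u) ≤ Mμ`: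
if `u ≠ 0` then `1 − K₂/λ̂ − K₂ᵍ/λ̃ ≤ K_p C_p (2qMμ/(q−2))^{(p−2)/2}
+ K_l C_l' (2qMμ/(q−2))^{(l−2)/2}`; and for `μ` small enough this inequality
fails, so no such nonzero `u` exists. -/
theorem stmt_19 (q M μ lamhat lamtil K₂ K₂g Kp Kl Cp Cl p l : ℝ)
    (nu l2sq bdsq intfu intgu intF intG lp ll : ℝ)
    (hq : 2 < q) (hM : 0 < M) (hμ : 0 < μ)
    (hlamhat : 0 < lamhat) (hlamtil : 0 < lamtil)
    (hp : 2 < p) (hl : 2 < l)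
    (hK2 : 0 ≤ K₂) (hK2g : 0 ≤ K₂g) (hKp : 0 ≤ Kp) (hKl : 0 ≤ Kl)
    (hCp : 0 ≤ Cp) (hCl : 0 ≤ Cl)
    (hsmall : K₂ / lamhat + K₂g / lamtil < 1)
    (hnu : 0 ≤ nu) (hl2 : 0 ≤ l2sq) (hbd : 0 ≤ bdsq)
    (heig1 : lamhat * l2sq ≤ nu ^ 2)
    (heig2 : lamtil * bdsq ≤ nu ^ 2)
    (hcrit : nu ^ 2 = intfu + intgu)
    (hE : nu ^ 2 / 2 - intF - intG ≤ M * μ)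
    (hARF0 : 0 ≤ q * intF) (hARF : q * intF ≤ intfu)
    (hARG0 : 0 ≤ q * intG) (hARG : q * intG ≤ intgu)
    (hfb : intfu ≤ K₂ * l2sq + Kp * lp)
    (hgb : intgu ≤ K₂g * bdsq + Kl * ll)
    (hGNp : lp ≤ Cp * nu ^ p)
    (hGNl : ll ≤ Cl * nu ^ l) :
    (0 < nu →
      1 - K₂ / lamhat - K₂g / lamtil ≤
        Kp * Cp * (2 * q * M * μ / (q - 2)) ^ ((p - 2) / 2)
        + Kl * Cl * (2 * q * M * μ / (q - 2)) ^ ((l - 2) / 2)) ∧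
    (∃ μ₀ > (0:ℝ), ∀ μ' : ℝ, 0 < μ' → μ' < μ₀ →
      ¬ (1 - K₂ / lamhat - K₂g / lamtil ≤
        Kp * Cp * (2 * q * M * μ' / (q - 2)) ^ ((p - 2) / 2)
        + Kl * Cl * (2 * q * M * μ' / (q - 2)) ^ ((l - 2) / 2))) := by
  have hq2 : (0:ℝ) < q - 2 := by linarith
  have hqpos : (0:ℝ) < q := by linarith
  set B : ℝ := 2 * q * M * μ / (q - 2) with hBdef
  have hBpos : 0 < B := by
    apply div_pos _ hq2; positivity
  constructor
  · intro hnupos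
    -- nu^2 ≤ B
    have hB : nu ^ 2 ≤ B := by
      rw [hBdef, le_div_iff₀ hq2]
      have key := mul_le_mul_of_nonneg_left hE hqpos.le
      linarith [key]
    have h1 : l2sq ≤ nu ^ 2 / lamhat := by
      rw [le_div_iff₀ hlamhat]; linarith [mul_comm l2sq lamhat, heig1]
    have h2 : bdsq ≤ nu ^ 2 / lamtil := by
      rw [le_div_iff₀ hlamtil]; linarith [mul_comm bdsq lamtil, heig2]
    have hmain : nu ^ 2 ≤ (K₂ / lamhat + K₂g / lamtil) * nu ^ 2
        + Kp * Cp * nu ^ p + Kl * Cl * nu ^ l := by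
      have e1 : K₂ * l2sq ≤ K₂ * (nu ^ 2 / lamhat) := mul_le_mul_of_nonneg_left h1 hK2
      have e2 : K₂g * bdsq ≤ K₂g * (nu ^ 2 / lamtil) := mul_le_mul_of_nonneg_left h2 hK2g
      have e3 : Kp * lp ≤ Kp * (Cp * nu ^ p) := mul_le_mul_of_nonneg_left hGNp hKp
      have e4 : Kl * ll ≤ Kl * (Cl * nu ^ l) := mul_le_mul_of_nonneg_left hGNl hKl
      have hm : nu ^ 2 ≤ K₂ * (nu ^ 2 / lamhat) + K₂g * (nu ^ 2 / lamtil)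
          + Kp * (Cp * nu ^ p) + Kl * (Cl * nu ^ l) := by linarith
      calc nu ^ 2 ≤ K₂ * (nu ^ 2 / lamhat) + K₂g * (nu ^ 2 / lamtil)
            + Kp * (Cp * nu ^ p) + Kl * (Cl * nu ^ l) := hm
        _ = (K₂ / lamhat + K₂g / lamtil) * nu ^ 2
            + Kp * Cp * nu ^ p + Kl * Cl * nu ^ l := by ring
    have hsplitp : nu ^ p = nu ^ (p - 2) * nu ^ 2 := by
      rw [show p = (p - 2) + 2 by ring, Real.rpow_add hnupos]
      norm_num [Real.rpow_natCast]
    have hsplitl : nu ^ l = nu ^ (l - 2) * nu ^ 2 := by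
      rw [show l = (l - 2) + 2 by ring, Real.rpow_add hnupos]
      norm_num [Real.rpow_natCast]
    have hbp : nu ^ (p - 2) ≤ B ^ ((p - 2) / 2) := by
      have h := Real.rpow_le_rpow (sq_nonneg nu) hB (by linarith : (0:ℝ) ≤ (p - 2) / 2)
      calc nu ^ (p - 2) = (nu ^ 2) ^ ((p - 2) / 2) := by
            rw [← Real.rpow_natCast nu 2, ← Real.rpow_mul hnu]
            congr 1
            push_cast; ring
        _ ≤ B ^ ((p - 2) / 2) := h
    have hbl : nu ^ (l - 2) ≤ B ^ ((l - 2) / 2) := by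
      have h := Real.rpow_le_rpow (sq_nonneg nu) hB (by linarith : (0:ℝ) ≤ (l - 2) / 2)
      calc nu ^ (l - 2) = (nu ^ 2) ^ ((l - 2) / 2) := by
            rw [← Real.rpow_natCast nu 2, ← Real.rpow_mul hnu]
            congr 1
            push_cast; ring
        _ ≤ B ^ ((l - 2) / 2) := h
    have hnusq : 0 < nu ^ 2 := by positivity
    have hdiv : 1 - K₂ / lamhat - K₂g / lamtil ≤ Kp * Cp * nu ^ (p - 2) + Kl * Cl * nu ^ (l - 2) := by
      rw [hsplitp, hsplitl] at hmain
      rw [← mul_le_mul_iff_of_pos_right hnusq]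
      linarith [hmain]
    calc 1 - K₂ / lamhat - K₂g / lamtil
        ≤ Kp * Cp * nu ^ (p - 2) + Kl * Cl * nu ^ (l - 2) := hdiv
      _ ≤ Kp * Cp * B ^ ((p - 2) / 2) + Kl * Cl * B ^ ((l - 2) / 2) := by
          gcongr <;> positivity
  · have hc : 0 < 1 - K₂ / lamhat - K₂g / lamtil := by linarith
    set g : ℝ → ℝ := fun t =>
      Kp * Cp * (2 * q * M * t / (q - 2)) ^ ((p - 2) / 2)
      + Kl * Cl * (2 * q * M * t / (q - 2)) ^ ((l - 2) / 2) with hg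
    have hinner : ContinuousAt (fun t : ℝ => 2 * q * M * t / (q - 2)) 0 := by fun_prop
    have hinner0 : (fun t : ℝ => 2 * q * M * t / (q - 2)) 0 = 0 := by simp
    have hcont : ContinuousAt g 0 := by
      apply ContinuousAt.add
      · apply ContinuousAt.mul continuousAt_const
        exact hinner.rpow_const (Or.inr (by linarith))
      · apply ContinuousAt.mul continuousAt_const
        exact hinner.rpow_const (Or.inr (by linarith))
    have hg0 : g 0 = 0 := by
      simp only [hg]
      rw [mul_zero, zero_div, Real.zero_rpow (by linarith), Real.zero_rpow (by linarith)]
      ring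
    obtain ⟨δ, hδ, hclose⟩ := Metric.continuousAt_iff.mp hcont _ hc
    refine ⟨δ, hδ, ?_⟩
    intro μ' hμ'pos hμ'lt hcontra
    have hdist : dist μ' 0 < δ := by
      rw [Real.dist_eq, sub_zero, abs_of_pos hμ'pos]; exact hμ'lt
    have := hclose hdist
    rw [hg0, Real.dist_eq, sub_zero] at this
    have hgle : g μ' < 1 - K₂ / lamhat - K₂g / lamtil := lt_of_abs_lt this
    exact absurd hcontra (not_le.mpr hgle)
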